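/- Let n ≥ 2 be an integer and consider the sphere braid group B_{2n+1}(S²) on 2n+1 strands, presented over FreeGroup (Fin 2n). Let β_{1,n} be the image in B_{2n+1}(S²) of the word σ_1 σ_2 ⋯ σ_n · σ_{n+1} · σ_{n+2}⁻¹ ⋯ σ_{2n}⁻¹, and let δ be the image of σ_1 σ_2 ⋯ σ_{2n}. Then for every integer q, the element β_{1,n} is not conjugate in B_{2n+1}(S²) to δ^q. (The exponent sum of β_{1,n} is 2, while that of δ^q is 2nq, and 2 is not congruent to 2nq modulo 4n when n ≥ 2.) -/
import Mathlib


/-- The relators of the sphere braid group `B_l(S²)`. -/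
def sphereBraidRels (l : ℕ) : Set (FreeGroup (Fin (l - 1))) :=
  {r | (∃ i j : Fin (l - 1), 2 ≤ |(i : ℤ) - (j : ℤ)| ∧
          r = FreeGroup.of i * FreeGroup.of j * (FreeGroup.of i)⁻¹ * (FreeGroup.of j)⁻¹) ∨
       (∃ i j : Fin (l - 1), (i : ℕ) + 1 = (j : ℕ) ∧
          r = FreeGroup.of i * FreeGroup.of j * FreeGroup.of i *
              (FreeGroup.of j)⁻¹ * (FreeGroup.of i)⁻¹ * (FreeGroup.of j)⁻¹) ∨
       r = (List.ofFn fun i : Fin (l - 1) => FreeGroup.of i).prod *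
           ((List.ofFn fun i : Fin (l - 1) => FreeGroup.of i).reverse).prod}

/-- The word `σ_1 σ_2 ⋯ σ_n · σ_{n+1} · σ_{n+2}⁻¹ ⋯ σ_{2n}⁻¹` in the free group on the
`2n` generators of `B_{2n+1}(S²)` (the generator indexed by `i : Fin 2n` is `σ_{i+1}`). -/
def betaWord (n : ℕ) : FreeGroup (Fin (2 * n + 1 - 1)) :=
  (List.ofFn fun i : Fin (2 * n + 1 - 1) =>
      if (i : ℕ) ≤ n then FreeGroup.of i else (FreeGroup.of i)⁻¹).prod

/-- The word `σ_1 σ_2 ⋯ σ_{2n}`. -/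
def deltaWord (n : ℕ) : FreeGroup (Fin (2 * n + 1 - 1)) :=
  (List.ofFn fun i : Fin (2 * n + 1 - 1) => FreeGroup.of i).prod

open Multiplicative Finset

/-- exponent sum hom -/
def expSum (m : ℕ) : FreeGroup (Fin m) →* Multiplicative ℤ :=
  FreeGroup.lift fun _ => ofAdd 1

lemma expSum_listProd (m : ℕ) :
    expSum m (List.ofFn fun i : Fin m => FreeGroup.of i).prod = ofAdd (m : ℤ) := by
  rw [map_list_prod, List.map_ofFn, List.prod_ofFn]
  simp only [expSum, Function.comp, FreeGroup.lift_apply_of]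
  rw [Finset.prod_const, Finset.card_univ, Fintype.card_fin]
  apply Multiplicative.toAdd.injective
  simp

lemma expSum_deltaWord (n : ℕ) : expSum _ (deltaWord n) = ofAdd ((2 * n : ℕ) : ℤ) :=
  expSum_listProd _

lemma expSum_betaWord (n : ℕ) (hn : 1 ≤ n) : expSum _ (betaWord n) = ofAdd 2 := by
  rw [betaWord, map_list_prod, List.map_ofFn, List.prod_ofFn]
  simp only [expSum, Function.comp, apply_ite (FreeGroup.lift fun _ => ofAdd (1:ℤ)), map_inv, FreeGroup.lift_apply_of]
  apply Multiplicative.toAdd.injective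
  rw [toAdd_prod]
  simp only [apply_ite Multiplicative.toAdd, toAdd_ofAdd, toAdd_inv]
  have h2 : (2 * n + 1 - 1 : ℕ) = 2 * n := rfl
  rw [Fin.sum_univ_eq_sum_range (fun i => if i ≤ n then (1:ℤ) else -(1:ℤ)), h2]
  rw [Finset.range_eq_Ico, ← Finset.sum_Ico_consecutive _ (Nat.zero_le (n+1)) (by omega : n + 1 ≤ 2 * n)]
  rw [Finset.sum_congr rfl (fun i hi => if_pos (by simp at hi; omega)),
      Finset.sum_congr rfl (fun i hi => if_neg (by simp at hi; omega))]
  simp [Nat.card_Ico]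
  ring_nf
  omega

theorem beta_one_n_not_conjugate_to_power_of_delta (n : ℕ) (hn : 2 ≤ n) (q : ℤ) :
    ¬ IsConj (PresentedGroup.mk (sphereBraidRels (2 * n + 1)) (betaWord n))
        ((PresentedGroup.mk (sphereBraidRels (2 * n + 1)) (deltaWord n)) ^ q) := by
  intro hconj
  -- the exponent-sum-mod-4n homomorphism
  let ψ : Multiplicative ℤ →* Multiplicative (ZMod (4 * n)) :=
    AddMonoidHom.toMultiplicative (Int.castAddHom (ZMod (4 * n)))
  let f : Fin (2 * n + 1 - 1) → Multiplicative (ZMod (4 * n)) := fun _ => ψ (ofAdd 1)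
  have hlift : ∀ x, FreeGroup.lift f x = ψ (expSum (2 * n + 1 - 1) x) := by
    intro x
    have : FreeGroup.lift f = ψ.comp (expSum (2 * n + 1 - 1)) := by
      apply FreeGroup.ext_hom
      intro i
      simp [expSum, f]
    rw [this]; rfl
  have hrev : expSum (2 * n + 1 - 1)
      ((List.ofFn fun i : Fin (2 * n + 1 - 1) => FreeGroup.of i).reverse).prod
      = ofAdd ((2 * n : ℕ) : ℤ) := by
    rw [map_list_prod, List.map_reverse, List.prod_reverse, ← map_list_prod]
    exact expSum_listProd _
  have h : ∀ r ∈ sphereBraidRels (2 * n + 1), FreeGroup.lift f r = 1 := by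
    intro r hr
    rw [hlift]
    rcases hr with ⟨i, j, _, rfl⟩ | ⟨i, j, _, rfl⟩ | rfl
    · simp only [map_mul, map_inv, expSum, FreeGroup.lift_apply_of]
      group
    · simp only [map_mul, map_inv, expSum, FreeGroup.lift_apply_of]
      group
    · rw [map_mul, hrev]
      have h1 : expSum (2 * n + 1 - 1)
          (List.ofFn fun i : Fin (2 * n + 1 - 1) => FreeGroup.of i).prod
          = ofAdd ((2 * n : ℕ) : ℤ) := expSum_listProd _
      rw [h1, ← ofAdd_add,
        show ((2 * n : ℕ) : ℤ) + ((2 * n : ℕ) : ℤ) = ((4 * n : ℕ) : ℤ) by push_cast; ring]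
      apply Multiplicative.toAdd.injective
      simp [ψ]
      rw [show ((n : ZMod (4 * n)) * 4) = ((4 * n : ℕ) : ZMod (4 * n)) by push_cast; ring,
        ZMod.natCast_self]
  let φ := PresentedGroup.toGroup h
  have hφmk : ∀ x, φ (PresentedGroup.mk (sphereBraidRels (2 * n + 1)) x)
      = FreeGroup.lift f x := fun _ => rfl
  have heq : φ (PresentedGroup.mk (sphereBraidRels (2 * n + 1)) (betaWord n))
      = φ ((PresentedGroup.mk (sphereBraidRels (2 * n + 1)) (deltaWord n)) ^ q) := by
    obtain ⟨c, hc⟩ := hconj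
    have := congrArg φ hc.eq
    rw [map_mul, map_mul] at this
    exact mul_right_cancel (by rw [← this]; exact mul_comm _ _)
  rw [map_zpow, hφmk, hφmk, hlift, hlift, expSum_betaWord n (by omega),
    expSum_deltaWord] at heq
  have heq2 : ((q * (2 * n) : ℤ) : ZMod (4 * n)) = ((2 : ℤ) : ZMod (4 * n)) := by
    have h0 := congrArg Multiplicative.toAdd heq
    simp only [ψ, toAdd_zpow, toAdd_ofAdd, AddMonoidHom.toMultiplicative_apply_apply,
      Int.coe_castAddHom, zsmul_eq_mul] at h0
    push_cast at h0 ⊢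
    linear_combination -h0
  rw [ZMod.intCast_eq_intCast_iff] at heq2
  have hdvd : ((4 * n : ℕ) : ℤ) ∣ (2 - q * (2 * n)) := Int.ModEq.dvd heq2
  have hdvd2 : (2 * (n : ℤ)) ∣ (2 - q * (2 * n)) :=
    dvd_trans ⟨2, by push_cast; ring⟩ hdvd
  have hdvd3 : (2 * (n : ℤ)) ∣ 2 := by
    have h4 := dvd_add hdvd2 (⟨q, by ring⟩ : (2 * (n : ℤ)) ∣ q * (2 * n))
    have h5 : (2 - q * (2 * n)) + q * (2 * n) = 2 := by ring
    rwa [h5] at h4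
  have := Int.le_of_dvd (by norm_num) hdvd3
  omega
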